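/- arXiv:2602.12130 — 3 statements merged into one kernel-verified Lean document; each statement's English description precedes it below -/
import Mathlib

section
/- Let σ be an inversion sequence of length n and i ∈ {1,...,n}. The sequence σ' obtained by deleting the entry σ_i from σ is an inversion sequence if and only if Sat(σ) ⊆ {1,...,i}, i.e., every saturated position of σ is at most i. -/
/-- `σ` is an inversion sequence: `σ_i ∈ {0,…,i-1}` (0-indexed: `σ[i] ≤ i`). -/
def IsInvSeq (σ : List ℕ) : Prop := ∀ i < σ.length, σ.getD i 0 ≤ i

/-- `σ` is a Cayley permutation: its value set is `{0,…,max σ}` (downward closed). -/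
def IsCayley (σ : List ℕ) : Prop := ∀ v w : ℕ, w ∈ σ → v ≤ w → v ∈ σ

/-- Maximum diagonal difference `max_i (σ_i - i + 1)` (0-indexed: `max_i (σ[i] - i)`). -/
def mdd (σ : List ℕ) : ℤ :=
  ((List.range σ.length).map (fun i => (σ.getD i 0 : ℤ) - i)).foldr max (-(σ.length : ℤ))

/-- `τ` and `σ` are order-isomorphic sequences of the same length. -/
def OrdIso (τ σ : List ℕ) : Prop :=
  τ.length = σ.length ∧ ∀ i j : ℕ, i < τ.length → j < τ.length →
    (τ.getD i 0 ≤ τ.getD j 0 ↔ σ.getD i 0 ≤ σ.getD j 0)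

/-- `σ` contains the pattern `ρ` (i.e. `ρ ⪯ σ`): some subsequence of `σ` is
order-isomorphic to `ρ`. -/
def ContainsPat (σ ρ : List ℕ) : Prop := ∃ τ : List ℕ, τ.Sublist σ ∧ OrdIso ρ τ

/-- The reduction of `σ`: the `j`-th smallest distinct value is replaced by `j-1`. -/
def red (σ : List ℕ) : List ℕ :=
  σ.map (fun v => (σ.toFinset.filter (fun w => w < v)).card)

/-- Number of distinct values of `σ`. -/
def distv (σ : List ℕ) : ℕ := σ.toFinset.card

/-- Positions (0-indexed) of saturated entries of `σ`. -/
def Sat (σ : List ℕ) : Set ℕ := {i | i < σ.length ∧ (σ.getD i 0 : ℤ) - i = mdd σ}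

/-- `σ` is a ρ-minimal inversion sequence: a minimal element, under pattern
containment, of the set of inversion sequences that are Cayley permutations and
contain `ρ`. -/
def IsMinimalFor (ρ σ : List ℕ) : Prop :=
  IsInvSeq σ ∧ IsCayley σ ∧ ContainsPat σ ρ ∧
  ∀ τ : List ℕ, IsInvSeq τ → IsCayley τ → ContainsPat τ ρ → ContainsPat σ τ → τ = σ

lemma foldr_max_le {L : List ℤ} {b c : ℤ} (hb : b ≤ c) (h : ∀ x ∈ L, x ≤ c) :
    L.foldr max b ≤ c := by
  induction L with
  | nil => exact hb
  | cons a t ih =>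
    simp only [List.foldr_cons, max_le_iff]
    exact ⟨h a (by simp), ih fun x hx => h x (by simp [hx])⟩

lemma le_foldr_max {L : List ℤ} {b x : ℤ} (hx : x ∈ L) : x ≤ L.foldr max b := by
  induction L with
  | nil => simp at hx
  | cons a t ih =>
    simp only [List.foldr_cons]
    rcases List.mem_cons.1 hx with h | h
    · exact h ▸ le_max_left _ _
    · exact le_trans (ih h) (le_max_right _ _)

lemma mdd_eq_zero {σ : List ℕ} (hσ : IsInvSeq σ) (h0 : 0 < σ.length) : mdd σ = 0 := by
  apply le_antisymm
  · apply foldr_max_le (neg_nonpos.2 (Int.natCast_nonneg _))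
    intro x hx
    simp only [List.mem_map, List.mem_range] at hx
    obtain ⟨j, hj, rfl⟩ := hx
    have := hσ j hj
    omega
  · have h00 : σ.getD 0 0 = 0 := Nat.le_zero.1 (hσ 0 h0)
    have : ((σ.getD 0 0 : ℤ) - 0) ∈ (List.range σ.length).map (fun i => (σ.getD i 0 : ℤ) - i) :=
      List.mem_map.2 ⟨0, List.mem_range.2 h0, rfl⟩
    have := le_foldr_max (b := -(σ.length : ℤ)) this
    rw [h00] at this
    simpa [mdd] using this

theorem stmt7 (σ : List ℕ) (hσ : IsInvSeq σ) (i : ℕ) (hi : i < σ.length) :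
    IsInvSeq (σ.eraseIdx i) ↔ ∀ j ∈ Sat σ, j ≤ i := by
  have hmdd : mdd σ = 0 := mdd_eq_zero hσ (Nat.pos_of_ne_zero (by omega))
  have hlen : (σ.eraseIdx i).length = σ.length - 1 := by
    rw [List.length_eraseIdx_of_lt hi]
  have hSat : ∀ j, j ∈ Sat σ ↔ j < σ.length ∧ σ.getD j 0 = j := by
    intro j
    simp only [Sat, Set.mem_setOf_eq, hmdd]
    constructor
    · rintro ⟨h1, h2⟩; exact ⟨h1, by omega⟩
    · rintro ⟨h1, h2⟩; exact ⟨h1, by omega⟩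
  constructor
  · intro h j hj
    by_contra hji
    push_neg at hji
    obtain ⟨hjl, hje⟩ := (hSat j).1 hj
    have hj1 : j - 1 < (σ.eraseIdx i).length := by omega
    have := h (j - 1) hj1
    have hg : (σ.eraseIdx i).getD (j - 1) 0 = σ.getD j 0 := by
      rw [List.getD_eq_getElem _ _ hj1, List.getD_eq_getElem _ _ hjl,
        List.getElem_eraseIdx_of_ge hj1 (by omega)]
      congr 1
      omega
    rw [hg, hje] at this
    omega
  · intro h
    intro j hj
    rcases lt_or_ge j i with hji | hji
    · have hjl : j < σ.length := by omega
      rw [List.getD_eq_getElem _ _ hj, List.getElem_eraseIdx_of_lt hj hji]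
      have := hσ j hjl
      rwa [List.getD_eq_getElem _ _ hjl] at this
    · have hjl : j + 1 < σ.length := by omega
      rw [List.getD_eq_getElem _ _ hj, List.getElem_eraseIdx_of_ge hj hji]
      have h1 := hσ (j + 1) hjl
      rw [List.getD_eq_getElem _ _ hjl] at h1
      by_contra hc
      push_neg at hc
      have heq : σ[j + 1] = j + 1 := by omega
      have : j + 1 ≤ i := h (j + 1) ((hSat (j + 1)).2
        ⟨hjl, by rw [List.getD_eq_getElem _ _ hjl]; exact heq⟩)
      omega
end

section
/- An inversion sequence σ contains a nonempty Cayley permutation ρ as a pattern if and only if σ contains some ρ-minimal inversion sequence as a pattern. -/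
lemma getD_mem {l : List ℕ} {i : ℕ} (h : i < l.length) : l.getD i 0 ∈ l := by
  rw [List.getD_eq_getElem _ _ h]; exact List.getElem_mem _

lemma mem_iff_getD {l : List ℕ} {v : ℕ} : v ∈ l ↔ ∃ i, i < l.length ∧ l.getD i 0 = v := by
  rw [List.mem_iff_getElem]
  constructor
  · rintro ⟨i, h, rfl⟩; exact ⟨i, h, List.getD_eq_getElem _ _ h⟩
  · rintro ⟨i, h, hv⟩; exact ⟨i, h, by rw [← List.getD_eq_getElem _ _ h]; exact hv⟩

lemma ordIso_symm {a b : List ℕ} (h : OrdIso a b) : OrdIso b a :=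
  ⟨h.1.symm, fun i j hi hj => (h.2 i j (h.1 ▸ hi) (h.1 ▸ hj)).symm⟩

lemma ordIso_refl (a : List ℕ) : OrdIso a a := ⟨rfl, fun _ _ _ _ => Iff.rfl⟩

lemma containsPat_refl (a : List ℕ) : ContainsPat a a := ⟨a, List.Sublist.refl a, ordIso_refl a⟩

lemma containsPat_transfer {a b ρ : List ℕ} (h : OrdIso a b) (hc : ContainsPat a ρ) :
    ContainsPat b ρ := by
  obtain ⟨τ, hsub, hiso⟩ := hc
  rw [List.sublist_iff_exists_fin_orderEmbedding_get_eq] at hsub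
  obtain ⟨f, hf⟩ := hsub
  have hlen : a.length = b.length := h.1
  set g : Fin τ.length → ℕ := fun ix => b.get (Fin.cast hlen (f ix)) with hg
  refine ⟨List.ofFn g, ?_, ?_⟩
  · rw [List.sublist_iff_exists_fin_orderEmbedding_get_eq]
    refine ⟨OrderEmbedding.ofStrictMono
      (fun ix : Fin (List.ofFn g).length => Fin.cast hlen (f (Fin.cast (by simp : (List.ofFn g).length = τ.length) ix)))
      (fun x y hxy => by
        simp only [Fin.lt_def, Fin.coe_cast]
        exact f.strictMono hxy), ?_⟩
    intro ix
    simp only [List.get_eq_getElem, OrderEmbedding.coe_ofStrictMono, List.getElem_ofFn, hg,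
      Fin.coe_cast]
    rfl
  · have hlg : (List.ofFn g).length = τ.length := List.length_ofFn
    have e2 : ∀ (k : ℕ) (hk : k < τ.length),
        (List.ofFn g).getD k 0 = b.getD ((f ⟨k, hk⟩).val) 0 := by
      intro k hk
      rw [List.getD_eq_getElem _ _ (by omega : k < (List.ofFn g).length),
        List.getD_eq_getElem _ _ (by rw [← hlen]; exact (f ⟨k, hk⟩).isLt)]
      simp [List.getElem_ofFn, g, List.get_eq_getElem]
    have e1 : ∀ (k : ℕ) (hk : k < τ.length),
        τ.getD k 0 = a.getD ((f ⟨k, hk⟩).val) 0 := by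
      intro k hk
      rw [List.getD_eq_getElem _ _ hk, List.getD_eq_getElem _ _ (f ⟨k, hk⟩).isLt]
      simpa [List.get_eq_getElem] using hf ⟨k, hk⟩
    refine ⟨by rw [hlg]; exact hiso.1, ?_⟩
    intro i j hi hj
    have hi' : i < τ.length := hiso.1 ▸ hi
    have hj' : j < τ.length := hiso.1 ▸ hj
    rw [e2 i hi', e2 j hj', ← h.2 _ _ (f ⟨i, hi'⟩).isLt (f ⟨j, hj'⟩).isLt,
      ← e1 i hi', ← e1 j hj']
    exact hiso.2 i j hi hj

lemma containsPat_of_sublist {a b ρ : List ℕ} (h : a.Sublist b) (hc : ContainsPat a ρ) :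
    ContainsPat b ρ := by
  obtain ⟨τ, hsub, hiso⟩ := hc
  exact ⟨τ, hsub.trans h, hiso⟩

lemma containsPat_trans {σ m ρ : List ℕ} (h1 : ContainsPat σ m) (h2 : ContainsPat m ρ) :
    ContainsPat σ ρ := by
  obtain ⟨τ₁, hs, hiso⟩ := h1
  exact containsPat_of_sublist hs (containsPat_transfer hiso h2)

lemma red_length (σ : List ℕ) : (red σ).length = σ.length := by simp [red]

lemma red_getD {σ : List ℕ} {i : ℕ} (h : i < σ.length) :
    (red σ).getD i 0 = (σ.toFinset.filter (fun w => w < σ.getD i 0)).card := by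
  rw [List.getD_eq_getElem _ _ (by rw [red_length]; exact h), List.getD_eq_getElem _ _ h]
  simp [red]

lemma filter_card_le_iff (s : Finset ℕ) {x y : ℕ} (hy : y ∈ s) :
    (s.filter (fun w => w < x)).card ≤ (s.filter (fun w => w < y)).card ↔ x ≤ y := by
  constructor
  · intro hc
    by_contra hxy
    push_neg at hxy
    have hss : s.filter (fun w => w < y) ⊂ s.filter (fun w => w < x) := by
      constructor
      · intro z hz
        simp only [Finset.mem_filter] at hz ⊢
        exact ⟨hz.1, hz.2.trans hxy⟩
      · intro hsub
        have := hsub (Finset.mem_filter.2 ⟨hy, hxy⟩)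
        simp at this
    exact absurd (Finset.card_lt_card hss) (by omega)
  · intro hxy
    refine Finset.card_le_card (fun z hz => ?_)
    simp only [Finset.mem_filter] at hz ⊢
    exact ⟨hz.1, lt_of_lt_of_le hz.2 hxy⟩

lemma ordIso_red (σ : List ℕ) : OrdIso (red σ) σ := by
  refine ⟨red_length σ, fun i j hi hj => ?_⟩
  rw [red_length] at hi hj
  rw [red_getD hi, red_getD hj]
  exact filter_card_le_iff _ (List.mem_toFinset.2 (getD_mem hj))

lemma invSeq_red {σ : List ℕ} (hσ : IsInvSeq σ) : IsInvSeq (red σ) := by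
  intro i hi
  rw [red_length] at hi
  rw [red_getD hi]
  have h1 : (σ.toFinset.filter (fun w => w < σ.getD i 0)).card ≤ σ.getD i 0 := by
    have : σ.toFinset.filter (fun w => w < σ.getD i 0) ⊆ Finset.range (σ.getD i 0) := by
      intro z hz
      simp only [Finset.mem_filter] at hz
      exact Finset.mem_range.2 hz.2
    simpa using Finset.card_le_card this
  exact h1.trans (hσ i hi)

lemma descent (s : Finset ℕ) : ∀ (n : ℕ) (u : ℕ), u ∈ s → (s.filter (fun w => w < u)).card = n →
    ∀ v ≤ n, ∃ u' ∈ s, (s.filter (fun w => w < u')).card = v := by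
  intro n
  induction n with
  | zero => intro u hu hc v hv; exact ⟨u, hu, by omega⟩
  | succ k ih =>
    intro u hu hc v hv
    rcases Nat.eq_or_lt_of_le hv with rfl | hvk
    · exact ⟨u, hu, hc⟩
    · have hne : (s.filter (fun w => w < u)).Nonempty := by
        rw [← Finset.card_pos, hc]; omega
      set u' := (s.filter (fun w => w < u)).max' hne with hu'def
      have hu'mem : u' ∈ s.filter (fun w => w < u) := Finset.max'_mem _ _
      have hu's : u' ∈ s := (Finset.mem_filter.1 hu'mem).1
      have hu'lt : u' < u := (Finset.mem_filter.1 hu'mem).2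
      have heq : s.filter (fun w => w < u') = (s.filter (fun w => w < u)).erase u' := by
        ext z
        simp only [Finset.mem_filter, Finset.mem_erase]
        constructor
        · rintro ⟨hz, hlt⟩
          exact ⟨by omega, hz, hlt.trans hu'lt⟩
        · rintro ⟨hne', hz, hlt⟩
          have hzmem : z ∈ s.filter (fun w => w < u) := Finset.mem_filter.2 ⟨hz, hlt⟩
          have := Finset.le_max' _ z hzmem
          exact ⟨hz, by omega⟩
      have hk : (s.filter (fun w => w < u')).card = k := by
        rw [heq, Finset.card_erase_of_mem hu'mem, hc]
        omega
      exact ih u' hu's hk v (by omega)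

lemma cayley_red (σ : List ℕ) : IsCayley (red σ) := by
  intro v w hw hvw
  rw [red, List.mem_map] at hw ⊢
  obtain ⟨u, hu, hwu⟩ := hw
  obtain ⟨u', hu', hv⟩ := descent σ.toFinset w u (List.mem_toFinset.2 hu) hwu v hvw
  exact ⟨u', List.mem_toFinset.1 hu', hv⟩

lemma cayley_ordIso_le {a b : List ℕ} (ha : IsCayley a) (h : OrdIso a b) {i : ℕ}
    (hi : i < a.length) : a.getD i 0 ≤ b.getD i 0 := by
  set x := a.getD i 0 with hx
  set y := b.getD i 0 with hy
  have hmem : ∀ v : ℕ, ∃ j, v < x → j < a.length ∧ a.getD j 0 = v := by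
    intro v
    by_cases hv : v < x
    · have hva : v ∈ a := ha v x (getD_mem hi) (le_of_lt hv)
      obtain ⟨j, hj1, hj2⟩ := mem_iff_getD.1 hva
      exact ⟨j, fun _ => ⟨hj1, hj2⟩⟩
    · exact ⟨0, fun hc => absurd hc hv⟩
  choose idx hidx using hmem
  have hcard : (Finset.range x).card ≤ (Finset.range y).card := by
    refine Finset.card_le_card_of_injOn (fun v => b.getD (idx v) 0) ?_ ?_
    · intro v hv
      rw [Finset.mem_coe, Finset.mem_range] at hv
      obtain ⟨hj, hav⟩ := hidx v hv
      have h1 : ¬ (a.getD i 0 ≤ a.getD (idx v) 0) := by rw [hav, ← hx]; omega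
      rw [h.2 i (idx v) hi hj] at h1
      rw [Finset.mem_coe, Finset.mem_range]
      simp only []
      omega
    · intro v hv w hw hvw
      rw [Finset.mem_coe, Finset.mem_range] at hv hw
      obtain ⟨hjv, hav⟩ := hidx v hv
      obtain ⟨hjw, haw⟩ := hidx w hw
      have h1 : a.getD (idx v) 0 ≤ a.getD (idx w) 0 :=
        (h.2 (idx v) (idx w) hjv hjw).2 (le_of_eq hvw)
      have h2 : a.getD (idx w) 0 ≤ a.getD (idx v) 0 :=
        (h.2 (idx w) (idx v) hjw hjv).2 (le_of_eq hvw.symm)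
      rw [hav, haw] at h1 h2
      omega
  simpa using hcard

lemma cayley_ordIso_eq {a b : List ℕ} (ha : IsCayley a) (hb : IsCayley b) (h : OrdIso a b) :
    a = b := by
  apply List.ext_getElem h.1
  intro i h1 h2
  have e1 := cayley_ordIso_le ha h h1
  have e2 := cayley_ordIso_le hb (ordIso_symm h) h2
  rw [List.getD_eq_getElem _ _ h1, List.getD_eq_getElem _ _ h2] at e1 e2
  omega

theorem stmt10 (σ ρ : List ℕ) (hσ : IsInvSeq σ) (hρ : ρ ≠ []) (hC : IsCayley ρ) :
    ContainsPat σ ρ ↔ ∃ τ : List ℕ, IsMinimalFor ρ τ ∧ ContainsPat σ τ := by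
  constructor
  · intro hcont
    have hP : ∃ n : ℕ, ∃ τ : List ℕ,
        (IsInvSeq τ ∧ IsCayley τ ∧ ContainsPat τ ρ ∧ ContainsPat σ τ) ∧ τ.length = n := by
      refine ⟨(red σ).length, red σ, ⟨invSeq_red hσ, cayley_red σ,
        containsPat_transfer (ordIso_symm (ordIso_red σ)) hcont,
        ⟨σ, List.Sublist.refl σ, ordIso_red σ⟩⟩, rfl⟩
    classical
    obtain ⟨τ, ⟨h1, h2, h3, h4⟩, hlen⟩ := Nat.find_spec hP
    refine ⟨τ, ⟨h1, h2, h3, ?_⟩, h4⟩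
    intro τ' hτ'1 hτ'2 hτ'3 hτ'4
    have hστ' : ContainsPat σ τ' := containsPat_trans h4 hτ'4
    have hn : Nat.find hP ≤ τ'.length :=
      Nat.find_le ⟨τ', ⟨hτ'1, hτ'2, hτ'3, hστ'⟩, rfl⟩
    obtain ⟨mu, hsub, hiso⟩ := hτ'4
    have hle : mu.length ≤ τ.length := hsub.length_le
    have hmt : mu = τ := hsub.eq_of_length (by have := hiso.1; omega)
    rw [hmt] at hiso
    exact cayley_ordIso_eq hτ'2 h2 hiso
  · rintro ⟨τ, hmin, hcont⟩
    exact containsPat_trans hcont hmin.2.2.1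
end

section
/- For every k ≥ 1 and ρ the decreasing pattern (k-1)(k-2)...210, the sequence 0 0 1 1 2 2 ... (k-3)(k-3)(k-2)(k-2) · (ρ_1+k-1, ..., ρ_k+k-1) is a ρ-minimal inversion sequence of length 3k-2. Hence the upper bound 3|ρ|-2 on lengths of ρ-minimal inversion sequences is attained for patterns of every length k ≥ 1. -/
namespace S16

/-- the doubled prefix equals a map of halves -/
lemma flatMap_pair (n : ℕ) :
    (List.range n).flatMap (fun i => [i, i]) = (List.range (2*n)).map (fun i => i/2) := by
  induction n with
  | zero => simp
  | succ n ih =>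
    have h2 : 2 * (n+1) = (2*n + 1) + 1 := by ring
    rw [List.range_succ, List.flatMap_append, ih, h2, List.range_succ, List.range_succ]
    simp only [List.map_append, List.flatMap_cons, List.flatMap_nil, List.map_cons, List.map_nil,
      List.append_assoc]
    congr 1
    have e1 : 2*n/2 = n := by omega
    have e2 : (2*n+1)/2 = n := by omega
    simp [e1, e2]

lemma card_image_congr (f g : ℕ → ℕ) (J : Finset ℕ) :
    (∀ i ∈ J, ∀ j ∈ J, (f i = f j ↔ g i = g j)) → (J.image f).card = (J.image g).card := by
  induction J using Finset.induction_on with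
  | empty => simp
  | @insert a s ha ih =>
    intro h
    rw [Finset.image_insert, Finset.image_insert]
    have hmem : f a ∈ s.image f ↔ g a ∈ s.image g := by
      simp only [Finset.mem_image]
      constructor
      · rintro ⟨j, hj, hfj⟩
        exact ⟨j, hj, ((h j (Finset.mem_insert_of_mem hj) a (Finset.mem_insert_self a s)).1 hfj)⟩
      · rintro ⟨j, hj, hgj⟩
        exact ⟨j, hj, ((h j (Finset.mem_insert_of_mem hj) a (Finset.mem_insert_self a s)).2 hgj)⟩
    have ihs := ih (fun i hi j hj => h i (Finset.mem_insert_of_mem hi) j (Finset.mem_insert_of_mem hj))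
    by_cases hf : f a ∈ s.image f
    · rw [Finset.insert_eq_self.2 hf, Finset.insert_eq_self.2 (hmem.1 hf), ihs]
    · rw [Finset.card_insert_of_notMem hf, Finset.card_insert_of_notMem (fun hg => hf (hmem.2 hg)), ihs]

lemma downward_closed_eq_range (S : Finset ℕ) (h : ∀ v w, w ∈ S → v ≤ w → v ∈ S) :
    S = Finset.range S.card := by
  have hsub : S ⊆ Finset.range S.card := by
    intro v hv
    rw [Finset.mem_range]
    by_contra hlt
    push_neg at hlt
    have hss : Finset.range (v+1) ⊆ S := by
      intro w hw
      exact h w v hv (by simpa using Nat.lt_succ_iff.1 (Finset.mem_range.1 hw))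
    have := Finset.card_le_card hss
    simp only [Finset.card_range] at this
    omega
  exact Finset.eq_of_subset_of_card_le hsub (by simp)

lemma toFinset_eq_image (l : List ℕ) :
    l.toFinset = (Finset.range l.length).image (fun i => l.getD i 0) := by
  ext v
  simp only [List.mem_toFinset, Finset.mem_image, Finset.mem_range]
  constructor
  · intro hv
    obtain ⟨n, hn, he⟩ := List.mem_iff_getElem.1 hv
    exact ⟨n, hn, by rw [List.getD_eq_getElem _ _ hn, he]⟩
  · rintro ⟨i, hi, rfl⟩
    rw [List.getD_eq_getElem _ _ hi]
    exact List.mem_iff_getElem.2 ⟨i, hi, rfl⟩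

lemma ordIso_refl (a : List ℕ) : OrdIso a a := ⟨rfl, fun _ _ _ _ => Iff.rfl⟩

lemma ordIso_trans {a b c : List ℕ} (h1 : OrdIso a b) (h2 : OrdIso b c) : OrdIso a c := by
  refine ⟨h1.1.trans h2.1, fun i j hi hj => ?_⟩
  rw [h1.2 i j hi hj, h2.2 i j (h1.1 ▸ hi) (h1.1 ▸ hj)]

lemma ordIso_eq_iff {a b : List ℕ} (h : OrdIso a b) (i j : ℕ) (hi : i < a.length)
    (hj : j < a.length) : (a.getD i 0 = a.getD j 0 ↔ b.getD i 0 = b.getD j 0) := by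
  rw [le_antisymm_iff, le_antisymm_iff, h.2 i j hi hj, h.2 j i hj hi]

lemma ordIso_lt_iff {a b : List ℕ} (h : OrdIso a b) (i j : ℕ) (hi : i < a.length)
    (hj : j < a.length) : (a.getD i 0 < a.getD j 0 ↔ b.getD i 0 < b.getD j 0) := by
  rw [lt_iff_le_not_ge, lt_iff_le_not_ge, h.2 i j hi hj, h.2 j i hj hi]

/-- transfer a sublist through an order isomorphism -/
lemma ordIso_sublist_transfer {a b u : List ℕ} (hab : OrdIso a b) (hu : u.Sublist a) :
    ∃ u', u'.Sublist b ∧ OrdIso u u' := by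
  classical
  obtain ⟨is, hue, hpair⟩ := List.sublist_eq_map_getElem hu
  have hlen := hab.1
  set is' : List (Fin b.length) := is.map (Fin.cast hlen) with his'
  refine ⟨is'.map b.get, List.map_getElem_sublist (l := b) (is := is') ?_, ?_, ?_⟩
  · exact List.Pairwise.map _ (fun x y hxy => by simpa using hxy) hpair
  · simp [hue, his']
  · intro i j hi hj
    have hlu : u.length = is.length := by rw [hue]; simp
    have hi' : i < is.length := hlu ▸ hi
    have hj' : j < is.length := hlu ▸ hj
    have hgu : ∀ t (ht : t < is.length), u.getD t 0 = a.getD (is.get ⟨t, ht⟩) 0 := by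
      intro t ht
      rw [hue, List.getD_eq_getElem _ _ (by simpa using ht), List.getD_eq_getElem _ _ (is.get ⟨t, ht⟩).isLt]
      simp
    have hgu' : ∀ t (ht : t < is.length), (is'.map b.get).getD t 0 = b.getD (is.get ⟨t, ht⟩) 0 := by
      intro t ht
      have ht2 : t < (is'.map b.get).length := by simp [his', ht]
      rw [List.getD_eq_getElem _ _ ht2, List.getD_eq_getElem _ _ (by
        rw [← hlen]; exact (is.get ⟨t, ht⟩).isLt)]
      simp [his']
    rw [hgu i hi', hgu j hj', hgu' i hi', hgu' j hj']
    exact hab.2 _ _ (is.get ⟨i, hi'⟩).isLt (is.get ⟨j, hj'⟩).isLt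

/-- two order isomorphic Cayley permutations are equal -/
lemma ordIso_cayley_eq {a b : List ℕ} (h : OrdIso a b) (ha : IsCayley a) (hb : IsCayley b) :
    a = b := by
  classical
  have hlen := h.1
  have key : ∀ (l : List ℕ), IsCayley l → ∀ i, i < l.length →
      l.getD i 0 = (((Finset.range l.length).filter
        (fun j => l.getD j 0 < l.getD i 0)).image (fun j => l.getD j 0)).card := by
    intro l hl i hi
    have h1 : l.toFinset = Finset.range l.toFinset.card :=
      downward_closed_eq_range _ (fun v w hw hvw => hl v w (List.mem_toFinset.1 hw) hvw
        |> List.mem_toFinset.2)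
    have hmem : l.getD i 0 ∈ l.toFinset := by
      rw [List.getD_eq_getElem _ _ hi]
      exact List.mem_toFinset.2 (List.getElem_mem hi)
    have hlt : l.getD i 0 < l.toFinset.card := by
      rw [h1] at hmem; exact Finset.mem_range.1 hmem
    have h2 : l.toFinset.filter (fun w => w < l.getD i 0) = Finset.range (l.getD i 0) := by
      rw [h1]
      ext w
      simp only [Finset.mem_filter, Finset.mem_range]
      omega
    have h3 : (l.toFinset.filter (fun w => w < l.getD i 0)).card = l.getD i 0 := by
      rw [h2, Finset.card_range]
    have h4 : l.toFinset.filter (fun w => w < l.getD i 0) =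
        ((Finset.range l.length).filter (fun j => l.getD j 0 < l.getD i 0)).image
          (fun j => l.getD j 0) := by
      rw [toFinset_eq_image, Finset.filter_image]
    rw [← h4, h3]
  apply List.ext_getElem hlen
  intro n h1 h2
  have e1 := key a ha n h1
  have e2 := key b hb n (hlen ▸ h1)
  have hJ : (Finset.range a.length).filter (fun j => a.getD j 0 < a.getD n 0) =
      (Finset.range b.length).filter (fun j => b.getD j 0 < b.getD n 0) := by
    rw [← hlen]
    ext j
    simp only [Finset.mem_filter, Finset.mem_range]
    constructor
    · rintro ⟨hj, hlt⟩
      exact ⟨hj, (ordIso_lt_iff h j n hj h1).1 hlt⟩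
    · rintro ⟨hj, hlt⟩
      exact ⟨hj, (ordIso_lt_iff h j n hj h1).2 hlt⟩
  rw [← List.getD_eq_getElem a 0 h1, ← List.getD_eq_getElem b 0 h2, e1, e2, ← hJ]
  apply card_image_congr
  intro i hi j hj
  simp only [Finset.mem_filter, Finset.mem_range] at hi hj
  exact ordIso_eq_iff h i j hi.1 hj.1

/-- number of distinct values is an order-iso invariant -/
lemma ordIso_toFinset_card {a b : List ℕ} (h : OrdIso a b) :
    a.toFinset.card = b.toFinset.card := by
  rw [toFinset_eq_image, toFinset_eq_image, ← h.1]
  apply card_image_congr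
  intro i hi j hj
  rw [Finset.mem_range] at hi hj
  exact ordIso_eq_iff h i j hi hj

lemma count_flatMap_pair_le (n v : ℕ) :
    ((List.range n).flatMap (fun i => [i, i])).count v ≤ 2 := by
  induction n with
  | zero => simp
  | succ n ih =>
    rw [List.range_succ, List.flatMap_append, List.count_append]
    by_cases hv : v = n
    · subst hv
      have : ((List.range v).flatMap (fun i => [i, i])).count v = 0 := by
        rw [List.count_eq_zero]
        intro hmem
        rw [List.mem_flatMap] at hmem
        obtain ⟨i, hi, hmi⟩ := hmem
        simp at hmi hi
        omega
      simp [this, List.count_cons]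
    · have : ([n, n] : List ℕ).count v = 0 := by
        simp [List.count_cons, hv, Ne.symm hv]
      simp only [List.flatMap_cons, List.flatMap_nil, List.append_nil] at this ⊢
      omega

/-- decreasingness of any list order-isomorphic to the reversed range -/
lemma decreasing_of_ordIso_revRange {k : ℕ} {u : List ℕ}
    (h : OrdIso (List.range k).reverse u) :
    u.length = k ∧ ∀ i j, i < j → j < k → u.getD j 0 < u.getD i 0 := by
  have hlen : u.length = k := by
    have := h.1; simpa using this.symm
  have hρlen : (List.range k).reverse.length = k := by simp
  have hρget : ∀ i, i < k → (List.range k).reverse.getD i 0 = k - 1 - i := by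
    intro i hi
    rw [List.getD_eq_getElem _ _ (by simpa using hi), List.getElem_reverse]
    simp
  refine ⟨hlen, fun i j hij hj => ?_⟩
  have hi : i < k := lt_trans hij hj
  have hd : (List.range k).reverse.getD j 0 < (List.range k).reverse.getD i 0 := by
    rw [hρget i hi, hρget j hj]; omega
  have := (ordIso_lt_iff h j i (by simpa using hj) (by simpa using hi)).1 hd
  simpa [hlen] using this

end S16

theorem stmt16 (k : ℕ) (hk : 1 ≤ k) (ρ σ : List ℕ)
    (hρ : ρ = (List.range k).reverse)
    (hσ : σ = ((List.range (k - 1)).flatMap fun i => [i, i]) ++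
      ((List.range k).reverse.map fun v => v + (k - 1))) :
    IsMinimalFor ρ σ ∧ σ.length = 3 * k - 2 := by
  subst hρ hσ
  set m := k - 1 with hm
  set D := (List.range m).flatMap (fun i => [i, i]) with hD
  set T := (List.range k).reverse.map (fun v => v + m) with hT
  have hDlen : D.length = 2 * m := by rw [hD, S16.flatMap_pair]; simp
  have hTlen : T.length = k := by simp [hT]
  have hσlen : (D ++ T).length = 3 * k - 2 := by
    rw [List.length_append, hDlen, hTlen]; omega
  have hDget : ∀ i < 2*m, D.getD i 0 = i / 2 := by
    intro i hi
    rw [hD, S16.flatMap_pair, List.getD_eq_getElem _ _ (by simpa using hi)]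
    simp
  have hTget : ∀ j < k, T.getD j 0 = (k - 1 - j) + m := by
    intro j hj
    rw [hT, List.getD_eq_getElem _ _ (by simpa using hj)]
    simp [List.getElem_reverse]
  have hmemD : ∀ v : ℕ, v ∈ D ↔ v < m := by
    intro v
    rw [hD, S16.flatMap_pair]
    simp only [List.mem_map, List.mem_range]
    constructor
    · rintro ⟨i, hi, rfl⟩; omega
    · intro hv; exact ⟨2*v, by omega, by omega⟩
  have hmemT : ∀ v : ℕ, v ∈ T ↔ (m ≤ v ∧ v ≤ 2*m) := by
    intro v
    rw [hT]
    simp only [List.mem_map, List.mem_reverse, List.mem_range]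
    constructor
    · rintro ⟨w, hw, rfl⟩; omega
    · intro hv; exact ⟨v - m, by omega, by omega⟩
  have hmemσ : ∀ v : ℕ, v ∈ D ++ T ↔ v ≤ 2*m := by
    intro v
    rw [List.mem_append, hmemD, hmemT]
    omega
  have hinv : IsInvSeq (D ++ T) := by
    intro i hi
    rw [List.length_append, hDlen, hTlen] at hi
    by_cases hcase : i < 2*m
    · rw [List.getD_append D T 0 i (by omega), hDget i hcase]
      omega
    · have hlt2 : i < (D ++ T).length := by
        rw [List.length_append, hDlen, hTlen]; omega
      rw [List.getD_eq_getElem _ _ hlt2, List.getElem_append_right (by omega)]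
      rw [← List.getD_eq_getElem T 0 (by rw [hTlen]; omega), hTget (i - D.length) (by omega)]
      omega
  have hcay : IsCayley (D ++ T) := by
    intro v w hw hvw
    rw [hmemσ] at hw ⊢
    omega
  have hρget : ∀ i < k, (List.range k).reverse.getD i 0 = k - 1 - i := by
    intro i hi
    rw [List.getD_eq_getElem _ _ (by simpa using hi)]
    simp [List.getElem_reverse]
  have hTiso : OrdIso (List.range k).reverse T := by
    refine ⟨by simp [hTlen], fun i j hi hj => ?_⟩
    simp only [List.length_reverse, List.length_range] at hi hj
    rw [hρget i hi, hρget j hj, hTget i hi, hTget j hj]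
    omega
  have hcont : ContainsPat (D ++ T) (List.range k).reverse :=
    ⟨T, List.sublist_append_right D T, hTiso⟩
  refine ⟨⟨hinv, hcay, hcont, ?_⟩, hσlen⟩
  -- minimality
  intro τ hτinv hτcay hτρ hστ
  obtain ⟨τ', hτ'sub, hiso⟩ := hστ
  obtain ⟨u, husub, huiso⟩ := hτρ
  obtain ⟨u', hu'sub, huu'⟩ := S16.ordIso_sublist_transfer hiso husub
  have hρu' : OrdIso (List.range k).reverse u' := S16.ordIso_trans huiso huu'
  obtain ⟨hu'len, hu'dec⟩ := S16.decreasing_of_ordIso_revRange hρu'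
  have hu'σ : u'.Sublist (D ++ T) := hu'sub.trans hτ'sub
  obtain ⟨a, b, hab, haD, hbT⟩ := List.sublist_append_iff.1 hu'σ
  have ha : a = [] := by
    cases a with
    | nil => rfl
    | cons x xs =>
      exfalso
      have hx : x ∈ D := haD.subset List.mem_cons_self
      have hxm : x < m := (hmemD x).1 hx
      have h0 : u'.getD 0 0 = x := by rw [hab]; rfl
      have hgrow : ∀ j, j < k → j + u'.getD j 0 ≤ u'.getD 0 0 := by
        intro j
        induction j with
        | zero => intro _; omega
        | succ j ih =>
          intro hj
          have h1 := ih (by omega)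
          have h2 := hu'dec j (j+1) (by omega) hj
          omega
      have := hgrow (k-1) (by omega)
      omega
  subst ha
  simp only [List.nil_append] at hab
  have hbeq : b = T := hbT.eq_of_length (by rw [← hab, hu'len, hTlen])
  have hTτ' : T.Sublist τ' := by rw [← hbeq, ← hab]; exact hu'sub
  obtain ⟨p, s, hps, hpD, hsT⟩ := List.sublist_append_iff.1 hτ'sub
  have hTps : T.Sublist (p ++ s) := hps ▸ hTτ'
  obtain ⟨a', b', ha'b', ha'p, hb's⟩ := List.sublist_append_iff.1 hTps
  have ha' : a' = [] := by
    cases a' with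
    | nil => rfl
    | cons x xs =>
      exfalso
      have hx1 : x ∈ p := ha'p.subset List.mem_cons_self
      have hx2 : x ∈ D := hpD.subset hx1
      have hx3 : x ∈ T := by
        rw [ha'b']
        exact List.mem_append_left _ List.mem_cons_self
      have hlt := (hmemD x).1 hx2
      have hge := (hmemT x).1 hx3
      omega
  subst ha'
  simp only [List.nil_append] at ha'b'
  have hsT' : s = T := List.Sublist.antisymm hsT (ha'b' ▸ hb's)
  rw [hsT'] at hps
  -- counting facts
  have hplen2 : p.length ≤ 2 * p.toFinset.card := by
    have hsum : ∑ v ∈ p.toFinset, p.count v = p.length := by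
      simpa using Multiset.toFinset_sum_count_eq (p : Multiset ℕ)
    have hb2 : ∀ v ∈ p.toFinset, p.count v ≤ 2 := by
      intro v _
      calc p.count v ≤ D.count v := hpD.count_le v
        _ ≤ 2 := by rw [hD]; exact S16.count_flatMap_pair_le m v
    calc p.length = ∑ v ∈ p.toFinset, p.count v := hsum.symm
      _ ≤ p.toFinset.card • 2 := Finset.sum_le_card_nsmul _ _ _ hb2
      _ = 2 * p.toFinset.card := by rw [smul_eq_mul]; ring
  have hscard : p.toFinset.card ≤ m := by
    have hss : p.toFinset ⊆ Finset.range m := by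
      intro v hv
      rw [Finset.mem_range]
      exact (hmemD v).1 (hpD.subset (List.mem_toFinset.1 hv))
    simpa using Finset.card_le_card hss
  have hTnodup : T.Nodup := by
    rw [hT]
    exact (List.nodup_reverse.2 (List.nodup_range)).map (add_left_injective m)
  have hTcard : T.toFinset.card = k := by
    rw [List.toFinset_card_of_nodup hTnodup, hTlen]
  have hdisj : Disjoint p.toFinset T.toFinset := by
    rw [Finset.disjoint_left]
    intro v hvp hvT
    have h1 := (hmemD v).1 (hpD.subset (List.mem_toFinset.1 hvp))
    have h2 := (hmemT v).1 (List.mem_toFinset.1 hvT)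
    omega
  have hτ'card : τ'.toFinset.card = p.toFinset.card + k := by
    rw [hps, List.toFinset_append, Finset.card_union_of_disjoint hdisj, hTcard]
  have hτcard : τ.toFinset.card = p.toFinset.card + k :=
    (S16.ordIso_toFinset_card hiso).trans hτ'card
  set t := p.length with ht
  have hτ'len : τ'.length = t + k := by rw [hps, List.length_append, hTlen]
  have hτlen : τ.length = t + k := by rw [hiso.1, hτ'len]
  have htlt : t < τ.length := by omega
  have hT0 : T.getD 0 0 = 2*m := by rw [hTget 0 (by omega)]; omega
  have hτ't : τ'.getD t 0 = 2*m := by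
    have hlt2 : t < (p ++ T).length := by rw [List.length_append, hTlen]; omega
    rw [hps, List.getD_eq_getElem _ _ hlt2, List.getElem_append_right (le_refl p.length)]
    simp only [Nat.sub_self]
    rw [← List.getD_eq_getElem T 0 (by rw [hTlen]; omega)]
    exact hT0
  have hmax' : ∀ j < τ'.length, τ'.getD j 0 ≤ τ'.getD t 0 := by
    intro j hj
    rw [hτ't]
    have hmem : τ'.getD j 0 ∈ τ' := by
      rw [List.getD_eq_getElem _ _ hj]; exact List.getElem_mem hj
    exact (hmemσ _).1 (hτ'sub.subset hmem)
  have hmax : ∀ j < τ.length, τ.getD j 0 ≤ τ.getD t 0 := by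
    intro j hj
    exact (hiso.2 j t hj htlt).2 (hmax' j (by rw [← hiso.1]; exact hj))
  set M := τ.getD t 0 with hM
  have hMmem : M ∈ τ := by
    rw [hM, List.getD_eq_getElem _ _ htlt]; exact List.getElem_mem htlt
  have hτfin : τ.toFinset = Finset.range (M+1) := by
    ext v
    simp only [List.mem_toFinset, Finset.mem_range]
    constructor
    · intro hv
      obtain ⟨n, hn, rfl⟩ := List.mem_iff_getElem.1 hv
      have := hmax n hn
      rw [← List.getD_eq_getElem τ 0 hn]
      omega
    · intro hv
      exact hτcay v M hMmem (by omega)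
  have hdistv : M + 1 = p.toFinset.card + k := by
    rw [← hτcard, hτfin, Finset.card_range]
  have hMt : M ≤ t := hτinv t htlt
  have hpfull : p.length = 2*m := by omega
  have hpD' : p = D := hpD.eq_of_length (by rw [hpfull, hDlen])
  have hτ'σ : τ' = D ++ T := by rw [hps, hpD']
  exact S16.ordIso_cayley_eq (hτ'σ ▸ hiso) hτcay hcay
end
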